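/- Let {{−,−}} be a double Poisson bracket on A and N ≥ 1. Then there is a unique Poisson bracket {−,−}_N on O(Rep_N(A)) — that is, a k-bilinear antisymmetric map O(Rep_N(A)) × O(Rep_N(A)) → O(Rep_N(A)) satisfying the Jacobi identity and the Leibniz rule {F, GH}_N = {F,G}_N·H + G·{F,H}_N in each argument — such that for all a, b ∈ A and all 1 ≤ i,j,s,t ≤ N one has {a_{ij}, b_{st}}_N = Σ_r (u_r)_{sj}·(v_r)_{it}, where {{a,b}} = Σ_r u_r ⊗ v_r. -/

import Mathlib

/-!
Statement 5: a double Poisson bracket `{{-,-}}` on `A` induces, for each `N ≥ 1`, a unique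
Poisson bracket `{-,-}_N` on the coordinate ring `O(Rep_N(A))` — a `k`-bilinear antisymmetric
map satisfying the Jacobi identity and the Leibniz rule in each argument — such that
`{a_{ij}, b_{st}} = Σ_r (u_r)_{sj} (v_r)_{it}` where `{{a,b}} = Σ_r u_r ⊗ v_r`.
-/

noncomputable section

set_option maxHeartbeats 1000000
set_option synthInstance.maxHeartbeats 100000

open TensorProduct MvPolynomial

variable (k : Type*) [Field k] [CharZero k]
variable (A : Type*) [Ring A] [Algebra k A]
variable (N : ℕ)

/-- `{{a, x′⊗x″}}_L := {{a,x′}} ⊗ x″`, as a linear map `A ⊗ A → (A ⊗ A) ⊗ A`. -/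
def leftExt (D : A ⊗[k] A →ₗ[k] A ⊗[k] A) (a : A) :
    A ⊗[k] A →ₗ[k] (A ⊗[k] A) ⊗[k] A :=
  LinearMap.rTensor A (D ∘ₗ TensorProduct.mk k A A a)

/-- The cyclic permutation `σ(x′⊗x″⊗x‴) = x‴⊗x′⊗x″` on `(A ⊗ A) ⊗ A`. -/
def cyc : (A ⊗[k] A) ⊗[k] A →ₗ[k] (A ⊗[k] A) ⊗[k] A :=
  (TensorProduct.assoc k A A A).symm.toLinearMap ∘ₗ
    (TensorProduct.comm k (A ⊗[k] A) A).toLinearMap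

/-- A double Poisson bracket on `A`. -/
def IsDoublePoisson (D : A ⊗[k] A →ₗ[k] A ⊗[k] A) : Prop :=
  (∀ a b : A, D (a ⊗ₜ[k] b) = - (TensorProduct.comm k A A) (D (b ⊗ₜ[k] a))) ∧
  (∀ a b c : A,
      D (a ⊗ₜ[k] (b * c)) =
        LinearMap.lTensor A (LinearMap.mulRight k c) (D (a ⊗ₜ[k] b)) +
        LinearMap.rTensor A (LinearMap.mulLeft k b) (D (a ⊗ₜ[k] c))) ∧
  (∀ a b c : A,
      leftExt k A D a (D (b ⊗ₜ[k] c)) +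
      cyc k A (leftExt k A D b (D (c ⊗ₜ[k] a))) +
      cyc k A (cyc k A (leftExt k A D c (D (a ⊗ₜ[k] b)))) = 0)

/-- Defining relations of the coordinate ring `O(Rep_N(A))`. -/
def repRel : Set (MvPolynomial (A × Fin N × Fin N) k) :=
  {p | (∃ (a b : A) (i j : Fin N), p = X (a + b, i, j) - X (a, i, j) - X (b, i, j)) ∨
       (∃ (c : k) (a : A) (i j : Fin N), p = X (c • a, i, j) - MvPolynomial.C c * X (a, i, j)) ∨
       (∃ (a b : A) (i j : Fin N),
          p = X (a * b, i, j) - ∑ s : Fin N, X (a, i, s) * X (b, s, j)) ∨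
       (∃ i j : Fin N, p = X ((1 : A), i, j) - if i = j then 1 else 0)}

/-- The coordinate ring `O(Rep_N(A))`, presented by generators `a_{ij}` and relations. -/
def RepAlg := MvPolynomial (A × Fin N × Fin N) k ⧸ Ideal.span (repRel k A N)

instance : CommRing (RepAlg k A N) :=
  inferInstanceAs (CommRing (MvPolynomial (A × Fin N × Fin N) k ⧸ Ideal.span (repRel k A N)))

instance : Algebra k (RepAlg k A N) :=
  inferInstanceAs (Algebra k (MvPolynomial (A × Fin N × Fin N) k ⧸ Ideal.span (repRel k A N)))

/-- The generator `a_{ij}` of `O(Rep_N(A))`, as a `k`-linear map in `a`. -/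
def genL (i j : Fin N) : A →ₗ[k] RepAlg k A N where
  toFun a := Ideal.Quotient.mkₐ k (Ideal.span (repRel k A N)) (X (a, i, j))
  map_add' a b := by
    have h : (X (a + b, i, j) - (X (a, i, j) + X (b, i, j)) : MvPolynomial (A × Fin N × Fin N) k)
        ∈ Ideal.span (repRel k A N) :=
      Ideal.subset_span (Or.inl ⟨a, b, i, j, by ring⟩)
    show Ideal.Quotient.mkₐ k _ (X (a + b, i, j)) =
      Ideal.Quotient.mkₐ k _ (X (a, i, j)) + Ideal.Quotient.mkₐ k _ (X (b, i, j))
    refine Eq.trans ?_ (map_add (Ideal.Quotient.mkₐ k (Ideal.span (repRel k A N))) (X (a, i, j)) (X (b, i, j)))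
    exact Ideal.Quotient.eq.mpr h
  map_smul' c a := by
    have h : (X (c • a, i, j) - MvPolynomial.C c * X (a, i, j) :
        MvPolynomial (A × Fin N × Fin N) k) ∈ Ideal.span (repRel k A N) :=
      Ideal.subset_span (Or.inr (Or.inl ⟨c, a, i, j, by ring⟩))
    show Ideal.Quotient.mkₐ k _ (X (c • a, i, j)) = c • Ideal.Quotient.mkₐ k _ (X (a, i, j))
    refine Eq.trans ?_ (map_smul (Ideal.Quotient.mkₐ k (Ideal.span (repRel k A N))) c (X (a, i, j)))
    rw [MvPolynomial.smul_eq_C_mul]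
    exact Ideal.Quotient.eq.mpr h

/-- The bilinear map `(u, v) ↦ u_{sj} · v_{it}` on `A × A` with values in `O(Rep_N(A))`,
used to evaluate a double bracket on generators. -/
def genPairing (s j i t : Fin N) : A →ₗ[k] A →ₗ[k] RepAlg k A N :=
  (LinearMap.mul k (RepAlg k A N)).compl₁₂ (genL k A N s j) (genL k A N i t)

section Aux
set_option linter.unusedSectionVars false

variable (k : Type*) [Field k] [CharZero k]
variable (A : Type*) [Ring A] [Algebra k A]
variable (N : ℕ)

local notation "σA" => (A × Fin N × Fin N)
local notation "MvP" => MvPolynomial (A × Fin N × Fin N) k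

instance : Module (MvPolynomial (A × Fin N × Fin N) k) (RepAlg k A N) :=
  inferInstanceAs (Module (MvPolynomial (A × Fin N × Fin N) k)
    (MvPolynomial (A × Fin N × Fin N) k ⧸ Ideal.span (repRel k A N)))

instance : IsScalarTower k (MvPolynomial (A × Fin N × Fin N) k) (RepAlg k A N) :=
  inferInstanceAs (IsScalarTower k (MvPolynomial (A × Fin N × Fin N) k)
    (MvPolynomial (A × Fin N × Fin N) k ⧸ Ideal.span (repRel k A N)))

/-- The quotient projection. -/
def pr : MvPolynomial (A × Fin N × Fin N) k →ₐ[k] RepAlg k A N :=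
  Ideal.Quotient.mkₐ k (Ideal.span (repRel k A N))

lemma genL_apply (i j : Fin N) (a : A) : genL k A N i j a = pr k A N (X (a, i, j)) := rfl

lemma pr_surj : Function.Surjective (pr k A N) :=
  Ideal.Quotient.mkₐ_surjective k _

lemma smul_pr (p : MvP) (x : RepAlg k A N) : p • x = pr k A N p * x := by
  obtain ⟨q, rfl⟩ := pr_surj k A N x
  rfl

lemma pr_sub_mem {p q : MvP} (h : p - q ∈ Ideal.span (repRel k A N)) :
    pr k A N p = pr k A N q := by
  have : Ideal.Quotient.mk (Ideal.span (repRel k A N)) p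
      = Ideal.Quotient.mk (Ideal.span (repRel k A N)) q := Ideal.Quotient.eq.mpr h
  exact this

lemma pr_mem {p : MvP} (h : p ∈ Ideal.span (repRel k A N)) : pr k A N p = 0 :=
  Ideal.Quotient.eq_zero_iff_mem.mpr h

lemma genL_mul (i j : Fin N) (a b : A) :
    genL k A N i j (a * b) = ∑ m : Fin N, genL k A N i m a * genL k A N m j b := by
  have h : (X (a * b, i, j) - ∑ m : Fin N, X (a, i, m) * X (b, m, j) : MvP)
      ∈ Ideal.span (repRel k A N) :=
    Ideal.subset_span (Or.inr (Or.inr (Or.inl ⟨a, b, i, j, rfl⟩)))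
  have h2 := pr_sub_mem k A N h
  rw [genL_apply, h2, map_sum]
  refine Finset.sum_congr rfl fun m _ => ?_
  rw [map_mul, genL_apply, genL_apply]

/-- The pairing `p ⊗ q ↦ p_{αβ} q_{γδ}`. -/
def pairing2 (α β γ δ : Fin N) : A ⊗[k] A →ₗ[k] RepAlg k A N :=
  TensorProduct.lift (genPairing k A N α β γ δ)

lemma pairing2_tmul (α β γ δ : Fin N) (p q : A) :
    pairing2 k A N α β γ δ (p ⊗ₜ[k] q) = genL k A N α β p * genL k A N γ δ q := by
  simp [pairing2, genPairing]

lemma pairing2_comm (α β γ δ : Fin N) (T : A ⊗[k] A) :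
    pairing2 k A N α β γ δ (TensorProduct.comm k A A T) = pairing2 k A N γ δ α β T := by
  induction T using TensorProduct.induction_on with
  | zero => simp
  | tmul p q => simp only [TensorProduct.comm_tmul, pairing2_tmul]; ring
  | add x y hx hy => simp only [map_add, hx, hy]

lemma pairing2_lTensor (α β γ δ : Fin N) (b : A) (T : A ⊗[k] A) :
    pairing2 k A N α β γ δ (LinearMap.lTensor A (LinearMap.mulRight k b) T)
      = ∑ m : Fin N, genL k A N m δ b * pairing2 k A N α β γ m T := by
  induction T using TensorProduct.induction_on with
  | zero => simp
  | tmul p q =>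
      simp only [LinearMap.lTensor_tmul, LinearMap.mulRight_apply, pairing2_tmul, genL_mul,
        Finset.mul_sum]
      refine Finset.sum_congr rfl fun m _ => ?_
      ring
  | add x y hx hy =>
      simp only [map_add, hx, hy, ← Finset.sum_add_distrib, mul_add]

lemma pairing2_rTensor (α β γ δ : Fin N) (a : A) (T : A ⊗[k] A) :
    pairing2 k A N α β γ δ (LinearMap.rTensor A (LinearMap.mulLeft k a) T)
      = ∑ m : Fin N, genL k A N α m a * pairing2 k A N m β γ δ T := by
  induction T using TensorProduct.induction_on with
  | zero => simp
  | tmul p q =>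
      simp only [LinearMap.rTensor_tmul, LinearMap.mulLeft_apply, pairing2_tmul, genL_mul,
        Finset.sum_mul]
      refine Finset.sum_congr rfl fun m _ => ?_
      ring
  | add x y hx hy =>
      simp only [map_add, hx, hy, ← Finset.sum_add_distrib, mul_add]

variable (D : A ⊗[k] A →ₗ[k] A ⊗[k] A)

/-- Value of the induced bracket on two generators. -/
def gb (v w : A × Fin N × Fin N) : RepAlg k A N :=
  pairing2 k A N w.2.1 v.2.2 v.2.1 w.2.2 (D (v.1 ⊗ₜ[k] w.1))

/-- Inner derivation: `F ↦ {F, w}` determined on generators. -/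
def innerD (w : A × Fin N × Fin N) : Derivation k (MvPolynomial (A × Fin N × Fin N) k) (RepAlg k A N) :=
  MvPolynomial.mkDerivation k (fun v => gb k A N D v w)

/-- The induced biderivation on the polynomial ring. -/
def P0 : MvP →ₗ[k] MvP →ₗ[k] RepAlg k A N where
  toFun F := (MvPolynomial.mkDerivation k (fun w => innerD k A N D w F)).toLinearMap
  map_add' F F' := by
    have h : MvPolynomial.mkDerivation k (fun w => innerD k A N D w (F + F'))
        = MvPolynomial.mkDerivation k (fun w => innerD k A N D w F)
          + MvPolynomial.mkDerivation k (fun w => innerD k A N D w F') :=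
      MvPolynomial.derivation_ext (fun i => by
        simp [MvPolynomial.mkDerivation_X, map_add])
    exact congrArg Derivation.toLinearMap h
  map_smul' c F := by
    have h : MvPolynomial.mkDerivation k (fun w => innerD k A N D w (c • F))
        = c • MvPolynomial.mkDerivation k (fun w => innerD k A N D w F) :=
      MvPolynomial.derivation_ext (fun i => by
        simp [MvPolynomial.mkDerivation_X, map_smul])
    exact congrArg Derivation.toLinearMap h

lemma P0_X_right (F : MvP) (w : A × Fin N × Fin N) :
    P0 k A N D F (X w) = innerD k A N D w F := by
  show (MvPolynomial.mkDerivation k (fun w => innerD k A N D w F)) (X w) = _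
  rw [MvPolynomial.mkDerivation_X]

lemma P0_X_X (v w : A × Fin N × Fin N) : P0 k A N D (X v) (X w) = gb k A N D v w := by
  rw [P0_X_right]
  show (MvPolynomial.mkDerivation k (fun v => gb k A N D v w)) (X v) = _
  rw [MvPolynomial.mkDerivation_X]

lemma P0_X_left (v : A × Fin N × Fin N) (G : MvP) :
    P0 k A N D (X v) G
      = (MvPolynomial.mkDerivation k (fun w => gb k A N D v w)) G := by
  show (MvPolynomial.mkDerivation k (fun w => innerD k A N D w (X v))) G = _
  congr 2
  funext w
  show (MvPolynomial.mkDerivation k (fun v => gb k A N D v w)) (X v) = _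
  rw [MvPolynomial.mkDerivation_X]

lemma P0_leib_right (F G H : MvP) :
    P0 k A N D F (G * H) = pr k A N G * P0 k A N D F H + pr k A N H * P0 k A N D F G := by
  show (MvPolynomial.mkDerivation k (fun w => innerD k A N D w F)) (G * H) = _
  rw [Derivation.leibniz, smul_pr, smul_pr]
  rfl

/-- Leibniz property in the argument, for linear maps into the quotient. -/
def LeibR (L : MvP →ₗ[k] RepAlg k A N) : Prop :=
  ∀ G H : MvP, L (G * H) = pr k A N G * L H + pr k A N H * L G

lemma leibR_one {L : MvP →ₗ[k] RepAlg k A N} (hL : LeibR k A N L) : L 1 = 0 := by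
  have h := hL 1 1
  rw [mul_one] at h
  simp only [map_one, one_mul] at h
  exact (left_eq_add.mp h)

lemma H0 {L : MvP →ₗ[k] RepAlg k A N} (hL : LeibR k A N L)
    (hgen : ∀ v : A × Fin N × Fin N, L (X v) = 0) : ∀ F, L F = 0 := by
  intro F
  induction F using MvPolynomial.induction_on with
  | C c =>
      rw [show (MvPolynomial.C c : MvP) = c • 1 from MvPolynomial.C_eq_smul_one,
        map_smul, leibR_one k A N hL, smul_zero]
  | add p q hp hq => rw [map_add, hp, hq, add_zero]
  | mul_X p n hp => rw [hL p (X n), hp, hgen, mul_zero, mul_zero, add_zero]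

lemma H0' {L L' : MvP →ₗ[k] RepAlg k A N} (hL : LeibR k A N L) (hL' : LeibR k A N L')
    (hgen : ∀ v : A × Fin N × Fin N, L (X v) = L' (X v)) : ∀ F, L F = L' F := by
  have h : ∀ F, (L - L') F = 0 := by
    refine H0 k A N ?_ ?_
    · intro G H
      simp only [LinearMap.sub_apply, hL G H, hL' G H]
      ring
    · intro v
      simp [LinearMap.sub_apply, hgen v]
  intro F
  have h2 := h F
  rw [LinearMap.sub_apply, sub_eq_zero] at h2
  exact h2

lemma P0_leib_left (F G H : MvP) :
    P0 k A N D (F * G) H = pr k A N F * P0 k A N D G H + pr k A N G * P0 k A N D F H := by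
  have key : ∀ H', P0 k A N D (F * G) H'
      = ((LinearMap.mulLeft k (pr k A N F)).comp (P0 k A N D G)
        + (LinearMap.mulLeft k (pr k A N G)).comp (P0 k A N D F)) H' := by
    refine H0' k A N ?_ ?_ ?_
    · intro G' H'; exact P0_leib_right k A N D _ G' H'
    · intro G' H'
      simp only [LinearMap.add_apply, LinearMap.coe_comp, Function.comp_apply,
        LinearMap.mulLeft_apply, P0_leib_right k A N D F G' H', P0_leib_right k A N D G G' H']
      ring
    · intro w
      simp only [LinearMap.add_apply, LinearMap.coe_comp, Function.comp_apply,
        LinearMap.mulLeft_apply, P0_X_right]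
      rw [show innerD k A N D w (F * G)
          = F • innerD k A N D w G + G • innerD k A N D w F from Derivation.leibniz _ F G]
      show F • (innerD k A N D w G : RepAlg k A N) + G • (innerD k A N D w F : RepAlg k A N) = _
      rw [smul_pr, smul_pr]
  have h := key H
  simpa only [LinearMap.add_apply, LinearMap.coe_comp, Function.comp_apply,
    LinearMap.mulLeft_apply] using h

lemma gb_antisym (hD : IsDoublePoisson k A D) (v w : A × Fin N × Fin N) :
    gb k A N D v w = - gb k A N D w v := by
  unfold gb
  rw [hD.1 v.1 w.1, map_neg, pairing2_comm]

lemma P0_antisym (hD : IsDoublePoisson k A D) (F G : MvP) :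
    P0 k A N D F G = - P0 k A N D G F := by
  have step1 : ∀ (w : A × Fin N × Fin N) (F' : MvP),
      P0 k A N D F' (X w) + P0 k A N D (X w) F' = 0 := by
    intro w
    have h0 : ∀ F', ((P0 k A N D).flip (X w) + P0 k A N D (X w)) F' = 0 := by
      refine H0 k A N ?_ ?_
      · intro G' H'
        simp only [LinearMap.add_apply, LinearMap.flip_apply]
        rw [P0_leib_left k A N D G' H' (X w), P0_leib_right k A N D (X w) G' H']
        ring
      · intro v
        simp only [LinearMap.add_apply, LinearMap.flip_apply, P0_X_X]
        rw [gb_antisym k A N D hD v w]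
        ring
    intro F'
    have := h0 F'
    simpa only [LinearMap.add_apply, LinearMap.flip_apply] using this
  have step2 : ∀ G', (P0 k A N D F + (P0 k A N D).flip F) G' = 0 := by
    refine H0 k A N ?_ ?_
    · intro G' H'
      simp only [LinearMap.add_apply, LinearMap.flip_apply]
      rw [P0_leib_right k A N D F G' H', P0_leib_left k A N D G' H' F]
      ring
    · intro w
      simpa only [LinearMap.add_apply, LinearMap.flip_apply] using step1 w F
  have h := step2 G
  rw [LinearMap.add_apply, LinearMap.flip_apply] at h
  exact eq_neg_of_add_eq_zero_left h

end Aux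
section Aux2
set_option linter.unusedSectionVars false

variable (k : Type*) [Field k] [CharZero k]
variable (A : Type*) [Ring A] [Algebra k A]
variable (N : ℕ)

local notation "MvP" => MvPolynomial (A × Fin N × Fin N) k

variable (D : A ⊗[k] A →ₗ[k] A ⊗[k] A)

lemma D_tmul_one (hD : IsDoublePoisson k A D) (c : A) : D (c ⊗ₜ[k] (1 : A)) = 0 := by
  have h := hD.2.1 c 1 1
  simp only [mul_one, LinearMap.mulRight_one, LinearMap.mulLeft_one, LinearMap.lTensor_id,
    LinearMap.rTensor_id, LinearMap.id_apply] at h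
  exact (left_eq_add.mp h)

lemma P0_X_rel (hD : IsDoublePoisson k A D) (v : A × Fin N × Fin N) :
    ∀ r ∈ repRel k A N, P0 k A N D (X v) r = 0 := by
  intro r hr
  rw [P0_X_left]
  set d := MvPolynomial.mkDerivation (A := RepAlg k A N) k (fun w => gb k A N D v w) with hd
  have hdX : ∀ w, d (X w) = gb k A N D v w := fun w => MvPolynomial.mkDerivation_X _ _ _
  rcases hr with ⟨a, b, i, j, rfl⟩ | ⟨c, a, i, j, rfl⟩ | ⟨a, b, i, j, rfl⟩ | ⟨i, j, rfl⟩
  · rw [map_sub, map_sub, hdX, hdX, hdX]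
    unfold gb
    rw [show (v.1 ⊗ₜ[k] (a + b) : A ⊗[k] A) = v.1 ⊗ₜ[k] a + v.1 ⊗ₜ[k] b from
      TensorProduct.tmul_add _ _ _, map_add, map_add]
    ring
  · rw [map_sub, MvPolynomial.C_mul', Derivation.map_smul, hdX, hdX]
    unfold gb
    rw [show (v.1 ⊗ₜ[k] (c • a) : A ⊗[k] A) = c • (v.1 ⊗ₜ[k] a) from
      TensorProduct.tmul_smul _ _ _, map_smul, map_smul]
    exact sub_self _
  · rw [map_sub, map_sum, hdX]
    have hmul : ∀ m : Fin N, d (X (a, i, m) * X (b, m, j))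
        = pr k A N (X (a, i, m)) * gb k A N D v (b, m, j)
          + pr k A N (X (b, m, j)) * gb k A N D v (a, i, m) := by
      intro m
      rw [Derivation.leibniz, hdX, hdX]
      show (X (a, i, m) : MvP) • (gb k A N D v (b, m, j))
          + (X (b, m, j) : MvP) • (gb k A N D v (a, i, m)) = _
      rw [smul_pr, smul_pr]
    rw [Finset.sum_congr rfl (fun m _ => hmul m)]
    unfold gb
    rw [hD.2.1 v.1 a b, map_add, pairing2_lTensor, pairing2_rTensor]
    simp only [← genL_apply]
    rw [sub_eq_zero, ← Finset.sum_add_distrib]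
    exact Finset.sum_congr rfl fun m _ => by ring
  · rw [map_sub, hdX]
    unfold gb
    rw [D_tmul_one k A D hD, map_zero]
    by_cases h : i = j
    · simp [h]
    · simp [h]

end Aux2
section Aux3
set_option linter.unusedSectionVars false

variable (k : Type*) [Field k] [CharZero k]
variable (A : Type*) [Ring A] [Algebra k A]
variable (N : ℕ)

local notation "MvP" => MvPolynomial (A × Fin N × Fin N) k

variable (D : A ⊗[k] A →ₗ[k] A ⊗[k] A)

lemma P0_rel_left (hD : IsDoublePoisson k A D) (r : MvP) (hr : r ∈ repRel k A N) :
    ∀ F, P0 k A N D F r = 0 := by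
  have h0 : ∀ F, ((P0 k A N D).flip r) F = 0 := by
    refine H0 k A N ?_ ?_
    · intro G H
      simp only [LinearMap.flip_apply]
      rw [P0_leib_left k A N D G H r]
    · intro v
      simp only [LinearMap.flip_apply]
      exact P0_X_rel k A N D hD v r hr
  intro F
  simpa using h0 F

lemma P0_ideal_right (hD : IsDoublePoisson k A D) {G : MvP}
    (hG : G ∈ Ideal.span (repRel k A N)) : ∀ F, P0 k A N D F G = 0 := by
  induction hG using Submodule.span_induction with
  | mem r hr => exact fun F => P0_rel_left k A N D hD r hr F
  | zero => intro F; rw [map_zero]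
  | add x y hx hy hx' hy' => intro F; rw [map_add, hx' F, hy' F, add_zero]
  | smul p x hx hx' =>
      intro F
      rw [smul_eq_mul, P0_leib_right k A N D F p x, hx' F, pr_mem k A N hx, zero_mul,
        mul_zero, add_zero]

lemma P0_ideal_left (hD : IsDoublePoisson k A D) {G : MvP}
    (hG : G ∈ Ideal.span (repRel k A N)) : ∀ F, P0 k A N D G F = 0 := by
  intro F
  rw [P0_antisym k A N D hD, P0_ideal_right k A N D hD hG F, neg_zero]

lemma P0_congr (hD : IsDoublePoisson k A D) {F F' G G' : MvP}
    (h1 : pr k A N F = pr k A N F') (h2 : pr k A N G = pr k A N G') :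
    P0 k A N D F G = P0 k A N D F' G' := by
  have m1 : F - F' ∈ Ideal.span (repRel k A N) := Ideal.Quotient.eq.mp h1
  have m2 : G - G' ∈ Ideal.span (repRel k A N) := Ideal.Quotient.eq.mp h2
  have e1 : P0 k A N D F G - P0 k A N D F' G = 0 := by
    have := P0_ideal_left k A N D hD m1 G
    rw [map_sub, LinearMap.sub_apply] at this
    exact this
  have e2 : P0 k A N D F' G - P0 k A N D F' G' = 0 := by
    have := P0_ideal_right k A N D hD m2 F'
    rw [map_sub] at this
    exact this
  have := sub_eq_zero.mp e1
  rw [this, sub_eq_zero.mp e2]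

/-- A preimage under the projection. -/
def pre (x : RepAlg k A N) : MvPolynomial (A × Fin N × Fin N) k :=
  Function.surjInv (pr_surj k A N) x

lemma pre_spec (x : RepAlg k A N) : pr k A N (pre k A N x) = x :=
  Function.surjInv_eq _ x

variable (hD : IsDoublePoisson k A D)

/-- The induced Poisson bracket on the representation algebra. -/
def Pmap : RepAlg k A N →ₗ[k] RepAlg k A N →ₗ[k] RepAlg k A N where
  toFun x :=
    { toFun := fun y => P0 k A N D (pre k A N x) (pre k A N y)
      map_add' := fun y y' => by
        show P0 k A N D (pre k A N x) (pre k A N (y + y'))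
          = P0 k A N D (pre k A N x) (pre k A N y) + P0 k A N D (pre k A N x) (pre k A N y')
        rw [P0_congr k A N D hD rfl
          (show pr k A N (pre k A N (y + y')) = pr k A N (pre k A N y + pre k A N y') by
            rw [map_add, pre_spec, pre_spec, pre_spec]), map_add]
      map_smul' := fun c y => by
        show P0 k A N D (pre k A N x) (pre k A N (c • y))
          = c • P0 k A N D (pre k A N x) (pre k A N y)
        rw [P0_congr k A N D hD rfl
          (show pr k A N (pre k A N (c • y)) = pr k A N (c • pre k A N y) by
            rw [map_smul, pre_spec, pre_spec]), map_smul] }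
  map_add' x x' := by
    refine LinearMap.ext fun y => ?_
    show P0 k A N D (pre k A N (x + x')) (pre k A N y) = _
    rw [P0_congr k A N D hD
      (show pr k A N (pre k A N (x + x')) = pr k A N (pre k A N x + pre k A N x') by
        rw [map_add, pre_spec, pre_spec, pre_spec]) rfl, map_add]
    rfl
  map_smul' c x := by
    refine LinearMap.ext fun y => ?_
    show P0 k A N D (pre k A N (c • x)) (pre k A N y) = _
    rw [P0_congr k A N D hD
      (show pr k A N (pre k A N (c • x)) = pr k A N (c • pre k A N x) by
        rw [map_smul, pre_spec, pre_spec]) rfl, map_smul]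
    rfl

lemma Pmap_pr (F G : MvP) :
    Pmap k A N D hD (pr k A N F) (pr k A N G) = P0 k A N D F G :=
  P0_congr k A N D hD (pre_spec k A N _) (pre_spec k A N _)

lemma Pmap_antisym (x y : RepAlg k A N) :
    Pmap k A N D hD x y = - Pmap k A N D hD y x := by
  obtain ⟨F, rfl⟩ := pr_surj k A N x
  obtain ⟨G, rfl⟩ := pr_surj k A N y
  rw [Pmap_pr, Pmap_pr, P0_antisym k A N D hD]

lemma Pmap_leib_right (x y z : RepAlg k A N) :
    Pmap k A N D hD x (y * z) = y * Pmap k A N D hD x z + z * Pmap k A N D hD x y := by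
  obtain ⟨F, rfl⟩ := pr_surj k A N x
  obtain ⟨G, rfl⟩ := pr_surj k A N y
  obtain ⟨H, rfl⟩ := pr_surj k A N z
  rw [← map_mul, Pmap_pr, Pmap_pr, Pmap_pr, P0_leib_right]

lemma Pmap_leib_left (x y z : RepAlg k A N) :
    Pmap k A N D hD (x * y) z = x * Pmap k A N D hD y z + y * Pmap k A N D hD x z := by
  obtain ⟨F, rfl⟩ := pr_surj k A N x
  obtain ⟨G, rfl⟩ := pr_surj k A N y
  obtain ⟨H, rfl⟩ := pr_surj k A N z
  rw [← map_mul, Pmap_pr, Pmap_pr, Pmap_pr, P0_leib_left]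

lemma Pmap_gen (a b : A) (i j s t : Fin N) :
    Pmap k A N D hD (genL k A N i j a) (genL k A N s t b)
      = pairing2 k A N s j i t (D (a ⊗ₜ[k] b)) := by
  rw [genL_apply, genL_apply, Pmap_pr, P0_X_X]
  rfl

lemma Pmap_one_right (x : RepAlg k A N) : Pmap k A N D hD x 1 = 0 := by
  have h := Pmap_leib_right k A N D hD x 1 1
  rw [mul_one, one_mul] at h
  exact (left_eq_add.mp h)

lemma Pmap_alg_right (x : RepAlg k A N) (c : k) :
    Pmap k A N D hD x (algebraMap k (RepAlg k A N) c) = 0 := by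
  rw [Algebra.algebraMap_eq_smul_one, map_smul, Pmap_one_right, smul_zero]

lemma Pmap_alg_left (x : RepAlg k A N) (c : k) :
    Pmap k A N D hD (algebraMap k (RepAlg k A N) c) x = 0 := by
  rw [Pmap_antisym, Pmap_alg_right, neg_zero]

end Aux3
section Aux4
set_option linter.unusedSectionVars false

variable (k : Type*) [Field k] [CharZero k]
variable (A : Type*) [Ring A] [Algebra k A]
variable (N : ℕ)

local notation "MvP" => MvPolynomial (A × Fin N × Fin N) k

/-- Triple pairing `(p ⊗ q) ⊗ r ↦ p_{αβ} q_{γδ} r_{εζ}`. -/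
def trip (α β γ δ ε ζ : Fin N) : (A ⊗[k] A) ⊗[k] A →ₗ[k] RepAlg k A N :=
  TensorProduct.lift
    ((LinearMap.mul k (RepAlg k A N)).compl₁₂ (pairing2 k A N α β γ δ) (genL k A N ε ζ))

lemma trip_tmul (α β γ δ ε ζ : Fin N) (x : A ⊗[k] A) (r : A) :
    trip k A N α β γ δ ε ζ (x ⊗ₜ[k] r)
      = pairing2 k A N α β γ δ x * genL k A N ε ζ r := by
  simp [trip]

lemma cyc_tmul (p q r : A) :
    cyc k A ((p ⊗ₜ[k] q) ⊗ₜ[k] r) = (r ⊗ₜ[k] p) ⊗ₜ[k] q := by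
  simp [cyc, TensorProduct.comm_tmul, TensorProduct.assoc_symm_tmul]

lemma trip_cyc (α β γ δ ε ζ : Fin N) (Z : (A ⊗[k] A) ⊗[k] A) :
    trip k A N α β γ δ ε ζ (cyc k A Z) = trip k A N γ δ ε ζ α β Z := by
  induction Z using TensorProduct.induction_on with
  | zero => simp
  | add x y hx hy => rw [map_add, map_add, map_add, hx, hy]
  | tmul x r =>
      induction x using TensorProduct.induction_on with
      | zero => rw [TensorProduct.zero_tmul, map_zero, map_zero, map_zero]
      | add x₁ x₂ h₁ h₂ =>
          rw [TensorProduct.add_tmul, map_add, map_add, map_add, h₁, h₂]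
      | tmul p q =>
          rw [cyc_tmul, trip_tmul, trip_tmul, pairing2_tmul, pairing2_tmul]
          ring

variable (D : A ⊗[k] A →ₗ[k] A ⊗[k] A) (hD : IsDoublePoisson k A D)

include hD in
lemma comm_D (p q : A) :
    TensorProduct.comm k A A (D (p ⊗ₜ[k] q)) = - D (q ⊗ₜ[k] p) := by
  rw [hD.1 q p, neg_neg]

lemma leftExt_tmul (a p q : A) :
    leftExt k A D a (p ⊗ₜ[k] q) = (D (a ⊗ₜ[k] p)) ⊗ₜ[k] q := by
  simp [leftExt]

lemma nest (a : A) (i j α β γ δ : Fin N) (T : A ⊗[k] A) :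
    Pmap k A N D hD (genL k A N i j a) (pairing2 k A N α β γ δ T)
      = trip k A N α j i β γ δ (leftExt k A D a T)
        + trip k A N γ j i δ α β (leftExt k A D a (TensorProduct.comm k A A T)) := by
  induction T using TensorProduct.induction_on with
  | zero => simp
  | add x y hx hy =>
      simp only [map_add, hx, hy]
      ring
  | tmul p q =>
      rw [pairing2_tmul, Pmap_leib_right k A N D hD, Pmap_gen k A N D hD,
        Pmap_gen k A N D hD, TensorProduct.comm_tmul, leftExt_tmul k A D,
        leftExt_tmul k A D, trip_tmul, trip_tmul]
      ring

lemma jac_gen (a b c : A) (i j s t u v : Fin N) :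
    Pmap k A N D hD (genL k A N i j a) (Pmap k A N D hD (genL k A N s t b) (genL k A N u v c))
    + Pmap k A N D hD (genL k A N s t b) (Pmap k A N D hD (genL k A N u v c) (genL k A N i j a))
    + Pmap k A N D hD (genL k A N u v c) (Pmap k A N D hD (genL k A N i j a) (genL k A N s t b))
      = 0 := by
  rw [Pmap_gen k A N D hD b c s t u v, Pmap_gen k A N D hD c a u v i j,
    Pmap_gen k A N D hD a b i j s t,
    nest k A N D hD a i j u t s v, nest k A N D hD b s t i v u j,
    nest k A N D hD c u v s j i t,
    comm_D k A D hD b c, comm_D k A D hD c a, comm_D k A D hD a b]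
  simp only [map_neg]
  have e2 := (trip_cyc k A N u j i t s v (leftExt k A D b (D (c ⊗ₜ[k] a)))).symm
  have e3 : trip k A N s v u j i t (leftExt k A D c (D (a ⊗ₜ[k] b)))
      = trip k A N u j i t s v (cyc k A (cyc k A (leftExt k A D c (D (a ⊗ₜ[k] b))))) := by
    rw [trip_cyc, trip_cyc]
  have f2 := (trip_cyc k A N s j i v u t (leftExt k A D c (D (b ⊗ₜ[k] a)))).symm
  have f3 : trip k A N u t s j i v (leftExt k A D b (D (a ⊗ₜ[k] c)))
      = trip k A N s j i v u t (cyc k A (cyc k A (leftExt k A D b (D (a ⊗ₜ[k] c))))) := by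
    rw [trip_cyc, trip_cyc]
  rw [e2, e3, f2, f3]
  have hsum1 : trip k A N u j i t s v (leftExt k A D a (D (b ⊗ₜ[k] c)))
      + trip k A N u j i t s v (cyc k A (leftExt k A D b (D (c ⊗ₜ[k] a))))
      + trip k A N u j i t s v (cyc k A (cyc k A (leftExt k A D c (D (a ⊗ₜ[k] b))))) = 0 := by
    rw [← map_add, ← map_add, hD.2.2 a b c, map_zero]
  have hsum2 : trip k A N s j i v u t (leftExt k A D a (D (c ⊗ₜ[k] b)))
      + trip k A N s j i v u t (cyc k A (leftExt k A D c (D (b ⊗ₜ[k] a))))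
      + trip k A N s j i v u t (cyc k A (cyc k A (leftExt k A D b (D (a ⊗ₜ[k] c))))) = 0 := by
    rw [← map_add, ← map_add, hD.2.2 a c b, map_zero]
  linear_combination hsum1 - hsum2

end Aux4
section Aux5
set_option linter.unusedSectionVars false

variable (k : Type*) [Field k] [CharZero k]
variable (A : Type*) [Ring A] [Algebra k A]
variable (N : ℕ)

local notation "MvP" => MvPolynomial (A × Fin N × Fin N) k

variable (D : A ⊗[k] A →ₗ[k] A ⊗[k] A) (hD : IsDoublePoisson k A D)

/-- The Jacobiator of the induced bracket. -/
def Jm (x y z : RepAlg k A N) : RepAlg k A N :=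
  Pmap k A N D hD x (Pmap k A N D hD y z) + Pmap k A N D hD y (Pmap k A N D hD z x)
    + Pmap k A N D hD z (Pmap k A N D hD x y)

lemma Jm_cyc (x y z : RepAlg k A N) :
    Jm k A N D hD x y z = Jm k A N D hD y z x := by
  unfold Jm; ring

lemma Jm_add1 (x x' y z : RepAlg k A N) :
    Jm k A N D hD (x + x') y z = Jm k A N D hD x y z + Jm k A N D hD x' y z := by
  unfold Jm; simp only [map_add, LinearMap.add_apply]; ring

lemma Jm_add2 (x y y' z : RepAlg k A N) :
    Jm k A N D hD x (y + y') z = Jm k A N D hD x y z + Jm k A N D hD x y' z := by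
  unfold Jm; simp only [map_add, LinearMap.add_apply]; ring

lemma Jm_add3 (x y z z' : RepAlg k A N) :
    Jm k A N D hD x y (z + z') = Jm k A N D hD x y z + Jm k A N D hD x y z' := by
  unfold Jm; simp only [map_add, LinearMap.add_apply]; ring

lemma Jm_leib3 (x y z w : RepAlg k A N) :
    Jm k A N D hD x y (z * w)
      = z * Jm k A N D hD x y w + w * Jm k A N D hD x y z := by
  unfold Jm
  simp only [Pmap_leib_right k A N D hD, Pmap_leib_left k A N D hD, map_add]
  rw [Pmap_antisym k A N D hD w x, Pmap_antisym k A N D hD z x]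
  ring

lemma Jm_alg3 (x y : RepAlg k A N) (c : k) :
    Jm k A N D hD x y (algebraMap k (RepAlg k A N) c) = 0 := by
  unfold Jm
  rw [Pmap_alg_right k A N D hD y c, Pmap_alg_left k A N D hD x c,
    Pmap_alg_left k A N D hD (Pmap k A N D hD x y) c, map_zero, map_zero]
  ring

lemma prC (c : k) : pr k A N (MvPolynomial.C c) = algebraMap k (RepAlg k A N) c := by
  rw [← MvPolynomial.algebraMap_eq]
  exact (pr k A N).commutes c

lemma Jm_zero (x y z : RepAlg k A N) : Jm k A N D hD x y z = 0 := by
  have base : ∀ v w u : A × Fin N × Fin N,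
      Jm k A N D hD (pr k A N (X v)) (pr k A N (X w)) (pr k A N (X u)) = 0 := by
    rintro ⟨a, i, j⟩ ⟨b, s, t⟩ ⟨c, u1, u2⟩
    rw [← genL_apply, ← genL_apply, ← genL_apply]
    exact jac_gen k A N D hD a b c i j s t u1 u2
  have step1 : ∀ (v w : A × Fin N × Fin N) (H : MvP),
      Jm k A N D hD (pr k A N (X v)) (pr k A N (X w)) (pr k A N H) = 0 := by
    intro v w H
    induction H using MvPolynomial.induction_on with
    | C c => rw [prC k A N c]; exact Jm_alg3 k A N D hD _ _ c
    | add p q hp hq => rw [map_add, Jm_add3, hp, hq, add_zero]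
    | mul_X p n hp => rw [map_mul, Jm_leib3, hp, base v w n, mul_zero, mul_zero, add_zero]
  have step2 : ∀ (v : A × Fin N × Fin N) (G H : MvP),
      Jm k A N D hD (pr k A N (X v)) (pr k A N G) (pr k A N H) = 0 := by
    intro v G
    induction G using MvPolynomial.induction_on with
    | C c =>
        intro H
        rw [prC k A N c, Jm_cyc, Jm_cyc]
        exact Jm_alg3 k A N D hD _ _ c
    | add p q hp hq =>
        intro H
        rw [map_add, Jm_add2, hp H, hq H, add_zero]
    | mul_X p n hp =>
        intro H
        rw [map_mul, Jm_cyc, Jm_cyc, Jm_leib3]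
        have e1 : Jm k A N D hD (pr k A N H) (pr k A N (X v)) (pr k A N (X n)) = 0 := by
          rw [Jm_cyc]; exact step1 v n H
        have e2 : Jm k A N D hD (pr k A N H) (pr k A N (X v)) (pr k A N p) = 0 := by
          rw [Jm_cyc]; exact hp H
        rw [e1, e2, mul_zero, mul_zero, add_zero]
  have step3 : ∀ (F G H : MvP),
      Jm k A N D hD (pr k A N F) (pr k A N G) (pr k A N H) = 0 := by
    intro F
    induction F using MvPolynomial.induction_on with
    | C c =>
        intro G H
        rw [prC k A N c, Jm_cyc]
        exact Jm_alg3 k A N D hD _ _ c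
    | add p q hp hq =>
        intro G H
        rw [map_add, Jm_add1, hp G H, hq G H, add_zero]
    | mul_X p n hp =>
        intro G H
        rw [map_mul, Jm_cyc, Jm_leib3]
        have e1 : Jm k A N D hD (pr k A N G) (pr k A N H) (pr k A N (X n)) = 0 := by
          rw [Jm_cyc, Jm_cyc]; exact step2 n G H
        have e2 : Jm k A N D hD (pr k A N G) (pr k A N H) (pr k A N p) = 0 := by
          rw [Jm_cyc, Jm_cyc]; exact hp G H
        rw [e1, e2, mul_zero, mul_zero, add_zero]
  obtain ⟨F, rfl⟩ := pr_surj k A N x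
  obtain ⟨G, rfl⟩ := pr_surj k A N y
  obtain ⟨H, rfl⟩ := pr_surj k A N z
  exact step3 F G H

end Aux5

theorem induced_Poisson_bracket_on_RepAlg
    (hN : 1 ≤ N) (D : A ⊗[k] A →ₗ[k] A ⊗[k] A) (hD : IsDoublePoisson k A D) :
    ∃! P : RepAlg k A N →ₗ[k] RepAlg k A N →ₗ[k] RepAlg k A N,
      (∀ F G, P F G = - P G F) ∧
      (∀ F G H, P F (P G H) + P G (P H F) + P H (P F G) = 0) ∧
      (∀ F G H, P F (G * H) = P F G * H + G * P F H) ∧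
      (∀ F G H, P (F * G) H = P F H * G + F * P G H) ∧
      (∀ (a b : A) (i j s t : Fin N),
        P (genL k A N i j a) (genL k A N s t b) =
          TensorProduct.lift (genPairing k A N s j i t) (D (a ⊗ₜ[k] b))) := by
  refine ⟨Pmap k A N D hD, ⟨?_, ?_, ?_, ?_, ?_⟩, ?_⟩
  · intro F G
    exact Pmap_antisym k A N D hD F G
  · intro F G H
    exact Jm_zero k A N D hD F G H
  · intro F G H
    rw [Pmap_leib_right k A N D hD F G H]
    ring
  · intro F G H
    rw [Pmap_leib_left k A N D hD F G H]
    ring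
  · intro a b i j s t
    exact Pmap_gen k A N D hD a b i j s t
  · intro P' ⟨hanti, _hjac, hleibR, hleibL, hgen⟩
    have hP'one : ∀ x, P' x 1 = 0 := by
      intro x
      have h := hleibR x 1 1
      rw [mul_one, mul_one, one_mul] at h
      exact left_eq_add.mp h
    have hP'algR : ∀ (x) (c : k), P' x (algebraMap k (RepAlg k A N) c) = 0 := by
      intro x c
      rw [Algebra.algebraMap_eq_smul_one, map_smul, hP'one, smul_zero]
    have hP'algL : ∀ (x) (c : k), P' (algebraMap k (RepAlg k A N) c) x = 0 := by
      intro x c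
      rw [hanti, hP'algR, neg_zero]
    have hXX : ∀ v w : A × Fin N × Fin N,
        P' (pr k A N (X v)) (pr k A N (X w))
          = Pmap k A N D hD (pr k A N (X v)) (pr k A N (X w)) := by
      rintro ⟨a, i, j⟩ ⟨b, s, t⟩
      rw [← genL_apply, ← genL_apply, hgen a b i j s t, Pmap_gen k A N D hD a b i j s t]
      rfl
    have claim1 : ∀ (v : A × Fin N × Fin N) (G : MvPolynomial (A × Fin N × Fin N) k),
        P' (pr k A N (X v)) (pr k A N G)
          = Pmap k A N D hD (pr k A N (X v)) (pr k A N G) := by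
      intro v G
      induction G using MvPolynomial.induction_on with
      | C c => rw [prC k A N c, hP'algR, Pmap_alg_right k A N D hD]
      | add p q hp hq => rw [map_add, map_add, map_add, hp, hq]
      | mul_X p n hp =>
          rw [map_mul, hleibR, Pmap_leib_right k A N D hD, hp, hXX v n]
          ring
    have claim2 : ∀ (F G : MvPolynomial (A × Fin N × Fin N) k),
        P' (pr k A N F) (pr k A N G)
          = Pmap k A N D hD (pr k A N F) (pr k A N G) := by
      intro F G
      induction F using MvPolynomial.induction_on with
      | C c => rw [prC k A N c, hP'algL, Pmap_alg_left k A N D hD]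
      | add p q hp hq =>
          rw [map_add, map_add P' _ _, map_add (Pmap k A N D hD) _ _,
            LinearMap.add_apply, LinearMap.add_apply, hp, hq]
      | mul_X p n hp =>
          rw [map_mul, hleibL, Pmap_leib_left k A N D hD, hp, claim1 n G]
          ring
    refine LinearMap.ext fun x => LinearMap.ext fun y => ?_
    obtain ⟨F, rfl⟩ := pr_surj k A N x
    obtain ⟨G, rfl⟩ := pr_surj k A N y
    exact claim2 F G

end
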